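/- (Theorem 3.1, equation (3.8): boundary-layer limit) Define A : [−1, 1] → ℝ by A(r) = tanh(β(λ/2)((1 + r)² − 1)) for r ∈ [−1, 0] and A(r) = tanh(β(λ/2)(1 − (1 − r)²)) for r ∈ (0, 1]. Then for every r ∈ [−1, 1] and every ε > 0 there exists L > 4 such that for every ℓ > L and every stationary solution (j, m) on [0, ℓ], one has |m(ℓ/2 + r) − A(r)| < ε. -/

import Mathlib

open Real Set Filter Topology MeasureTheory intervalIntegral

/-- The force profile `g(x) = ∫_{x-1}^x 1_{y ≤ ℓ/2} dy − ∫_x^{x+1} 1_{y ≤ ℓ/2} dy`. -/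
noncomputable def gfun (ℓ : ℝ) (x : ℝ) : ℝ :=
  (∫ y in (x - 1)..x, if y ≤ ℓ / 2 then (1 : ℝ) else 0) -
  (∫ y in x..(x + 1), if y ≤ ℓ / 2 then (1 : ℝ) else 0)

/-- An IVP solution with parameter `j`: a differentiable `m` on `[0, ℓ]` with `m 0 = 0`
and `m'(x) = -2j + βλ(1 - m(x)²) g(x)` on `[0, ℓ]`. -/
def IsIVPSolution (β lam ℓ j : ℝ) (m : ℝ → ℝ) : Prop :=
  m 0 = 0 ∧ ∀ x ∈ Icc (0 : ℝ) ℓ,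
    HasDerivAt m (-2 * j + β * lam * (1 - m x ^ 2) * gfun ℓ x) x

/-- A stationary solution: an IVP solution which also satisfies `m ℓ = 0`. -/
def IsStationarySolution (β lam ℓ j : ℝ) (m : ℝ → ℝ) : Prop :=
  IsIVPSolution β lam ℓ j m ∧ m ℓ = 0

/-- The boundary-layer limit profile `A` of (3.8). -/
noncomputable def Aprof (β lam : ℝ) (r : ℝ) : ℝ :=
  if r ≤ 0 then Real.tanh (β * (lam / 2) * ((1 + r) ^ 2 - 1))
  else Real.tanh (β * (lam / 2) * (1 - (1 - r) ^ 2))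


-- tanh basics
lemma tanh_exp (x : ℝ) : Real.tanh x = (exp x - exp (-x)) / (exp x + exp (-x)) := by
  rw [Real.tanh_eq_sinh_div_cosh, Real.sinh_eq, Real.cosh_eq]
  field_simp

lemma tanh_lt_one' (x : ℝ) : Real.tanh x < 1 := by
  rw [tanh_exp]
  rw [div_lt_one (by positivity)]
  nlinarith [Real.exp_pos (-x)]

lemma neg_one_lt_tanh' (x : ℝ) : -1 < Real.tanh x := by
  rw [tanh_exp]
  rw [lt_div_iff₀ (by positivity)]
  nlinarith [Real.exp_pos x]

lemma hasDerivAt_tanh' (x : ℝ) : HasDerivAt Real.tanh (1 - Real.tanh x ^ 2) x := by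
  have h := (Real.hasDerivAt_sinh x).div (Real.hasDerivAt_cosh x) (Real.cosh_pos x).ne'
  have : Real.tanh = fun x => Real.sinh x / Real.cosh x := by
    funext y; exact Real.tanh_eq_sinh_div_cosh y
  rw [this]
  refine h.congr_deriv ?_
  have hc := Real.cosh_pos x
  have hid : Real.cosh x ^ 2 - Real.sinh x ^ 2 = 1 := Real.cosh_sq_sub_sinh_sq x
  field_simp [Real.tanh_eq_sinh_div_cosh]

lemma tanh_strictMono : StrictMono Real.tanh := by
  have := fun x : ℝ => (hasDerivAt_tanh' x)
  apply strictMono_of_deriv_pos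
  intro x
  rw [(hasDerivAt_tanh' x).deriv]
  nlinarith [tanh_lt_one' x, neg_one_lt_tanh' x]

lemma tanh_lipschitz (u v : ℝ) : |Real.tanh u - Real.tanh v| ≤ |u - v| := by
  rcases lt_trichotomy u v with h | h | h
  · have hc : ContinuousOn Real.tanh (Icc u v) := fun x _ => (hasDerivAt_tanh' x).continuousAt.continuousWithinAt
    obtain ⟨c, _, hc'⟩ := exists_hasDerivAt_eq_slope Real.tanh (fun x => 1 - Real.tanh x ^ 2) h hc
      (fun x _ => hasDerivAt_tanh' x)
    have h1 : Real.tanh v - Real.tanh u = (1 - Real.tanh c ^ 2) * (v - u) := by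
      rw [hc', div_mul_cancel₀ _ (sub_ne_zero.mpr h.ne')]
    have h2 : 0 < 1 - Real.tanh c ^ 2 := by nlinarith [tanh_lt_one' c, neg_one_lt_tanh' c]
    have h3 : 1 - Real.tanh c ^ 2 ≤ 1 := by nlinarith [sq_nonneg (Real.tanh c)]
    rw [abs_sub_comm, abs_sub_comm u v, abs_of_pos (by nlinarith), abs_of_pos (by linarith)]
    nlinarith
  · simp [h]
  · have hc2 : ContinuousOn Real.tanh (Icc v u) := fun x _ => (hasDerivAt_tanh' x).continuousAt.continuousWithinAt
    obtain ⟨c, _, hc'⟩ := exists_hasDerivAt_eq_slope Real.tanh (fun x => 1 - Real.tanh x ^ 2) h hc2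
      (fun x _ => hasDerivAt_tanh' x)
    have h1 : Real.tanh u - Real.tanh v = (1 - Real.tanh c ^ 2) * (u - v) := by
      rw [hc', div_mul_cancel₀ _ (sub_ne_zero.mpr h.ne')]
    have h2 : 0 < 1 - Real.tanh c ^ 2 := by nlinarith [tanh_lt_one' c, neg_one_lt_tanh' c]
    have h3 : 1 - Real.tanh c ^ 2 ≤ 1 := by nlinarith [sq_nonneg (Real.tanh c)]
    rw [abs_of_pos (by nlinarith), abs_of_pos (by linarith)]
    nlinarith

-- artanh
noncomputable def myatanh (x : ℝ) : ℝ := Real.log ((1 + x) / (1 - x)) / 2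

lemma tanh_myatanh {x : ℝ} (h1 : -1 < x) (h2 : x < 1) : Real.tanh (myatanh x) = x := by
  have hA : (0:ℝ) < (1 + x) / (1 - x) := div_pos (by linarith) (by linarith)
  have he : exp (2 * myatanh x) = (1 + x) / (1 - x) := by
    rw [myatanh]; rw [show 2 * (Real.log ((1 + x) / (1 - x)) / 2) = Real.log ((1+x)/(1-x)) by ring]
    exact Real.exp_log hA
  have h2 : Real.tanh (myatanh x) = (exp (2 * myatanh x) - 1) / (exp (2 * myatanh x) + 1) := by
    rw [tanh_exp]
    have h3 : exp (2 * myatanh x) = exp (myatanh x) * exp (myatanh x) := by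
      rw [← Real.exp_add]; ring_nf
    rw [h3, Real.exp_neg]
    have h4 := (Real.exp_pos (myatanh x)).ne'
    field_simp
  rw [h2, he]
  have h5 : (1:ℝ) - x ≠ 0 := by linarith
  field_simp
  ring



lemma integral_ind (c a b : ℝ) (hab : a ≤ b) :
    (∫ y in a..b, if y ≤ c then (1:ℝ) else 0) = min b c - min a c := by
  have h1 : (fun y => if y ≤ c then (1:ℝ) else 0) = Set.indicator (Iic c) (fun _ => (1:ℝ)) := by
    funext y; simp [Set.indicator_apply, Set.mem_Iic]
  rw [intervalIntegral.integral_of_le hab, h1,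
    MeasureTheory.setIntegral_indicator measurableSet_Iic]
  have h2 : Ioc a b ∩ Iic c = Ioc a (min b c) := by
    ext y; simp only [Set.mem_inter_iff, Set.mem_Ioc, Set.mem_Iic, le_min_iff]; tauto
  rw [h2, MeasureTheory.setIntegral_const, measureReal_def, Real.volume_Ioc, smul_eq_mul, mul_one]
  rcases le_total c a with h|h
  · have hbc : min b c = c := min_eq_right (le_trans h hab)
    have hac : min a c = c := min_eq_right h
    rw [hbc, hac, ENNReal.ofReal_of_nonpos (by linarith), ENNReal.toReal_zero, sub_self]
  · have hac : min a c = a := min_eq_left h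
    have hm : a ≤ min b c := le_min hab h
    rw [hac, ENNReal.toReal_ofReal (by linarith)]

lemma gfun_eq (ℓ x : ℝ) : gfun ℓ x = max 0 (1 - |x - ℓ/2|) := by
  rw [gfun, integral_ind _ _ _ (by linarith : x - 1 ≤ x),
    integral_ind _ _ _ (by linarith : x ≤ x + 1)]
  rcases le_total (x+1) (ℓ/2) with h3 | h3
  · rw [min_eq_left h3, min_eq_left (by linarith : x ≤ ℓ/2),
      min_eq_left (by linarith : x - 1 ≤ ℓ/2), abs_of_nonpos (by linarith : x - ℓ/2 ≤ 0),
      max_eq_left (by linarith)]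
    ring
  · rcases le_total x (ℓ/2) with h2 | h2
    · rw [min_eq_left h2, min_eq_left (by linarith : x - 1 ≤ ℓ/2), min_eq_right h3,
        abs_of_nonpos (by linarith : x - ℓ/2 ≤ 0), max_eq_right (by linarith)]
      ring
    · rcases le_total (x-1) (ℓ/2) with h1 | h1
      · rw [min_eq_right h2, min_eq_left h1, min_eq_right (by linarith : ℓ/2 ≤ x + 1),
          abs_of_nonneg (by linarith : 0 ≤ x - ℓ/2), max_eq_right (by linarith)]
        ring
      · rw [min_eq_right h2, min_eq_right h1, min_eq_right (by linarith : ℓ/2 ≤ x + 1),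
          abs_of_nonneg (by linarith : 0 ≤ x - ℓ/2), max_eq_left (by linarith)]
        ring

lemma gfun_nonneg (ℓ x : ℝ) : 0 ≤ gfun ℓ x := by rw [gfun_eq]; exact le_max_left _ _

lemma gfun_symm (ℓ x : ℝ) : gfun ℓ (ℓ - x) = gfun ℓ x := by
  rw [gfun_eq, gfun_eq]
  congr 2
  rw [abs_sub_comm x (ℓ/2), show ℓ - x - ℓ/2 = ℓ/2 - x by ring]

lemma gfun_eq_zero_of_le {ℓ x : ℝ} (h : x ≤ ℓ/2 - 1) : gfun ℓ x = 0 := by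
  rw [gfun_eq, max_eq_left]
  rw [abs_of_nonpos (by linarith)]; linarith

lemma gfun_eq_weld {ℓ x : ℝ} (h : |x - ℓ/2| ≤ 1) : gfun ℓ x = 1 - |x - ℓ/2| := by
  rw [gfun_eq, max_eq_right]; linarith

lemma comparison {f φ f' φ' : ℝ → ℝ} {a b : ℝ} (hab : a ≤ b)
    (hf : ∀ x ∈ Icc a b, HasDerivAt f (f' x) x)
    (hφ : ∀ x ∈ Icc a b, HasDerivAt φ (φ' x) x)
    (h0 : f a < φ a)
    (hcross : ∀ x ∈ Icc a b, f x = φ x → f' x < φ' x) :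
    ∀ x ∈ Icc a b, f x < φ x := by
  by_contra hcon
  push_neg at hcon
  obtain ⟨z, hz, hzle⟩ := hcon
  set h : ℝ → ℝ := fun x => f x - φ x with hh
  have hcont : ContinuousOn h (Icc a b) := fun x hx =>
    (((hf x hx).continuousAt).sub ((hφ x hx).continuousAt)).continuousWithinAt
  set S : Set ℝ := Icc a b ∩ h ⁻¹' (Ici 0) with hSdef
  have hSsub : S ⊆ Icc a b := inter_subset_left
  have hSne : S.Nonempty := ⟨z, hz, by simp [hh]; linarith⟩
  have hSclosed : IsClosed S := by
    apply ContinuousOn.preimage_isClosed_of_isClosed hcont isClosed_Icc isClosed_Ici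
  have hSbdd : BddBelow S := ⟨a, fun x hx => (hSsub hx).1⟩
  set x₀ := sInf S with hx₀
  have hx₀S : x₀ ∈ S := hSclosed.csInf_mem hSne hSbdd
  have hx₀ab : x₀ ∈ Icc a b := hSsub hx₀S
  have hax₀ : a < x₀ := by
    rcases lt_or_eq_of_le hx₀ab.1 with h' | h'
    · exact h'
    · exfalso; have := hx₀S.2; simp [hh, ← h'] at this; linarith
  have hlt : ∀ x ∈ Ico a x₀, h x < 0 := by
    intro x hx
    by_contra hcx
    push_neg at hcx
    have hxS : x ∈ S := ⟨⟨hx.1, le_trans hx.2.le hx₀ab.2⟩, hcx⟩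
    exact absurd (csInf_le hSbdd hxS) (not_le.mpr hx.2)
  have heq : h x₀ = 0 := by
    refine le_antisymm ?_ hx₀S.2
    have hmem : Icc a b ∈ 𝓝[<] x₀ :=
      mem_of_superset (Ioo_mem_nhdsLT_of_mem ⟨hax₀, le_refl _⟩)
        (fun y hy => ⟨hy.1.le, le_trans hy.2.le hx₀ab.2⟩)
    have htd : Tendsto h (𝓝[<] x₀) (𝓝 (h x₀)) :=
      ((hcont x₀ hx₀ab).mono_of_mem_nhdsWithin hmem).tendsto
    refine le_of_tendsto htd ?_
    filter_upwards [Ioo_mem_nhdsLT_of_mem (⟨hax₀, le_refl x₀⟩ : x₀ ∈ Ioc a x₀)] with y hy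
    exact (hlt y ⟨hy.1.le, hy.2⟩).le
  have hfeq : f x₀ = φ x₀ := by simp [hh] at heq; linarith
  have hd : f' x₀ < φ' x₀ := hcross x₀ hx₀ab hfeq
  have hder : HasDerivAt h (f' x₀ - φ' x₀) x₀ := (hf x₀ hx₀ab).sub (hφ x₀ hx₀ab)
  have hslope : Tendsto (slope h x₀) (𝓝[≠] x₀) (𝓝 (f' x₀ - φ' x₀)) :=
    hasDerivAt_iff_tendsto_slope.mp hder
  have hslope' : Tendsto (slope h x₀) (𝓝[<] x₀) (𝓝 (f' x₀ - φ' x₀)) :=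
    hslope.mono_left (nhdsWithin_mono _ (fun y hy => ne_of_lt hy))
  have : 0 ≤ f' x₀ - φ' x₀ := by
    refine ge_of_tendsto hslope' ?_
    filter_upwards [Ioo_mem_nhdsLT_of_mem (⟨hax₀, le_refl x₀⟩ : x₀ ∈ Ioc a x₀)] with y hy
    rw [slope_def_field]
    have h1 : h y < 0 := hlt y ⟨hy.1.le, hy.2⟩
    have h2 : y - x₀ < 0 := by linarith [hy.2]
    rw [div_nonneg_iff]
    right
    constructor
    · simp [hh] at h1 ⊢; linarith [heq, hfeq]
    · linarith
  linarith

lemma const_of_deriv_zero {f : ℝ → ℝ} {a b : ℝ} (hab : a ≤ b)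
    (hf : ∀ x ∈ Icc a b, HasDerivAt f 0 x) : f b = f a :=
  constant_of_has_deriv_right_zero
    (fun x hx => (hf x hx).continuousAt.continuousWithinAt)
    (fun x hx => ((hf x (Ico_subset_Icc_self hx)).hasDerivWithinAt))
    b (right_mem_Icc.mpr hab)

lemma hasDerivAt_mul_abs (x : ℝ) : HasDerivAt (fun y : ℝ => y * |y|) (2 * |x|) x := by
  rcases lt_trichotomy x 0 with hx | hx | hx
  · have hev : (fun y : ℝ => -(y * y)) =ᶠ[nhds x] (fun y : ℝ => y * |y|) := by
      filter_upwards [Iio_mem_nhds hx] with y hy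
      rw [abs_of_neg hy]; ring
    have : HasDerivAt (fun y : ℝ => -(y * y)) (2 * |x|) x := by
      have := ((hasDerivAt_id x).mul (hasDerivAt_id x)).neg
      refine this.congr_deriv ?_
      rw [abs_of_neg hx]; simp; ring
    exact this.congr_of_eventuallyEq hev.symm
  · subst hx
    rw [hasDerivAt_iff_tendsto_slope]
    have hev : (fun y : ℝ => |y|) =ᶠ[𝓝[≠] (0:ℝ)] slope (fun y : ℝ => y * |y|) 0 := by
      filter_upwards [self_mem_nhdsWithin] with y hy
      rw [slope_def_field]
      simp only [mem_compl_iff, mem_singleton_iff] at hy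
      field_simp
      simp
    refine Tendsto.congr' hev ?_
    simp only [abs_zero, mul_zero]
    have : Tendsto (fun y : ℝ => |y|) (nhds 0) (nhds 0) := by
      have := continuous_abs.tendsto (0:ℝ)
      simpa using this
    exact this.mono_left nhdsWithin_le_nhds
  · have hev : (fun y : ℝ => y * y) =ᶠ[nhds x] (fun y : ℝ => y * |y|) := by
      filter_upwards [Ioi_mem_nhds hx] with y hy
      rw [abs_of_pos hy]
    have : HasDerivAt (fun y : ℝ => y * y) (2 * |x|) x := by
      have := (hasDerivAt_id x).mul (hasDerivAt_id x)
      refine this.congr_deriv ?_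
      rw [abs_of_pos hx]; simp; ring
    exact this.congr_of_eventuallyEq hev.symm

/-- primitive of the tent profile: `Gp c x` has derivative `1 - |x - c|`. -/
noncomputable def Gp (c x : ℝ) : ℝ := (x - c) + 1/2 - (x - c) * |x - c| / 2

lemma hasDerivAt_Gp (c x : ℝ) : HasDerivAt (Gp c) (1 - |x - c|) x := by
  have h1 : HasDerivAt (fun y : ℝ => y - c) 1 x := (hasDerivAt_id x).sub_const c
  have h2 := (hasDerivAt_mul_abs (x - c)).comp x h1
  have h4 : HasDerivAt (Gp c) (1 - 2 * |x - c| * 1 / 2) x :=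
    (h1.add_const (1/2:ℝ)).sub (h2.div_const 2)
  convert h4 using 1
  ring

lemma gfun_eq_zero_of_ge {ℓ x : ℝ} (h : ℓ/2 + 1 ≤ x) : gfun ℓ x = 0 := by
  rw [gfun_eq, max_eq_left]
  rw [abs_of_nonneg (by linarith)]; linarith

lemma Gp_left (c : ℝ) : Gp c (c - 1) = 0 := by
  unfold Gp; rw [show c - 1 - c = (-1:ℝ) by ring]; norm_num

lemma Gp_right (c : ℝ) : Gp c (c + 1) = 1 := by
  unfold Gp; rw [show c + 1 - c = (1:ℝ) by ring]; norm_num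

lemma Gp_bounds {c x : ℝ} (h : |x - c| ≤ 1) : 0 ≤ Gp c x ∧ Gp c x ≤ 1 := by
  unfold Gp
  rcases abs_cases (x - c) with ⟨h1, h2⟩ | ⟨h1, h2⟩ <;> rw [h1] <;>
    constructor <;> nlinarith [h1 ▸ h]

lemma hasDerivAt_barrier (βl c α K e : ℝ) (x : ℝ) :
    HasDerivAt (fun y => Real.tanh (βl * Gp c y + α + K * (y - (c - 1)) + e))
      ((1 - Real.tanh (βl * Gp c x + α + K * (x - (c - 1)) + e) ^ 2) *
        (βl * (1 - |x - c|) + K)) x := by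
  have hu : HasDerivAt (fun y => βl * Gp c y + α + K * (y - (c - 1)) + e)
      (βl * (1 - |x - c|) + K) x := by
    have h1 := (hasDerivAt_Gp c x).const_mul βl
    have h2 : HasDerivAt (fun y : ℝ => K * (y - (c - 1))) (K * 1) x :=
      ((hasDerivAt_id x).sub_const (c - 1)).const_mul K
    have h3 := ((h1.add_const α).add h2).add_const e
    refine h3.congr_deriv ?_
    ring
  exact (hasDerivAt_tanh' _).comp x hu

lemma weld_subset {ℓ : ℝ} (hℓ : 4 < ℓ) : Icc (ℓ/2 - 1) (ℓ/2 + 1) ⊆ Icc (0:ℝ) ℓ := by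
  intro x hx
  constructor
  · have := hx.1; linarith
  · have := hx.2; linarith

lemma endpoints {β lam ℓ j : ℝ} {m : ℝ → ℝ} (hℓ : 4 < ℓ)
    (hsol : IsStationarySolution β lam ℓ j m) :
    m (ℓ/2 - 1) = -(j * (ℓ - 2)) ∧ m (ℓ/2 + 1) = j * (ℓ - 2) := by
  obtain ⟨⟨hm0, hm⟩, hmℓ⟩ := hsol
  constructor
  · have hc := const_of_deriv_zero (f := fun y => m y + 2*j*y)
      (a := 0) (b := ℓ/2 - 1) (by linarith) ?_
    · have h6 : m (ℓ/2 - 1) + 2*j*(ℓ/2 - 1) = m 0 + 2*j*0 := hc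
      rw [hm0] at h6
      linear_combination h6
    · intro x hx
      have hx' : x ∈ Icc (0:ℝ) ℓ := ⟨hx.1, by linarith [hx.2]⟩
      have h5 := (hm x hx').add ((hasDerivAt_id x).const_mul (2*j))
      refine h5.congr_deriv ?_
      rw [gfun_eq_zero_of_le hx.2]
      ring
  · have hc := const_of_deriv_zero (f := fun y => m y + 2*j*y)
      (a := ℓ/2 + 1) (b := ℓ) (by linarith) ?_
    · have h6 : m ℓ + 2*j*ℓ = m (ℓ/2 + 1) + 2*j*(ℓ/2 + 1) := hc
      rw [hmℓ] at h6
      linear_combination -h6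
    · intro x hx
      have hx' : x ∈ Icc (0:ℝ) ℓ := ⟨by linarith [hx.1], hx.2⟩
      have h5 := (hm x hx').add ((hasDerivAt_id x).const_mul (2*j))
      refine h5.congr_deriv ?_
      rw [gfun_eq_zero_of_ge hx.1]
      ring

lemma j_nonneg {β lam ℓ j : ℝ} {m : ℝ → ℝ} (hβ : 0 < β) (hlam : 0 < lam) (hℓ : 4 < ℓ)
    (hsol : IsStationarySolution β lam ℓ j m) : 0 ≤ j := by
  by_contra hj
  push_neg at hj
  obtain ⟨ha, hb⟩ := endpoints hℓ hsol
  have hm := hsol.1.2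
  have hcomp := comparison (f := fun _ => (0:ℝ)) (φ := m)
    (f' := fun _ => (0:ℝ)) (φ' := fun x => -2*j + β*lam*(1 - m x^2)*gfun ℓ x)
    (a := ℓ/2 - 1) (b := ℓ/2 + 1) (by linarith)
    (fun x _ => hasDerivAt_const x 0)
    (fun x hx => hm x (weld_subset hℓ hx))
    (by rw [ha]; nlinarith)
    ?_ (ℓ/2 + 1) (by constructor <;> linarith)
  · rw [hb] at hcomp; nlinarith
  · intro x hx hxe
    rw [← hxe]
    nlinarith [gfun_nonneg ℓ x, mul_pos hβ hlam]

lemma upper_bd {β lam ℓ j : ℝ} {m : ℝ → ℝ} (hβ : 0 < β) (hlam : 0 < lam) (hℓ : 4 < ℓ)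
    (hj : 0 ≤ j)
    (hm : ∀ x ∈ Icc (0:ℝ) ℓ, HasDerivAt m (-2*j + β*lam*(1 - m x^2)*gfun ℓ x) x)
    (hma : m (ℓ/2 - 1) ≤ 0) :
    ∀ x ∈ Icc (ℓ/2 - 1) (ℓ/2 + 1), m x < Real.tanh (β*lam + 3) := by
  set c := ℓ/2 with hc
  have hcomp := comparison (f := m)
    (φ := fun y => Real.tanh (β*lam * Gp c y + 0 + 1 * (y - (c - 1)) + 1))
    (f' := fun x => -2*j + β*lam*(1 - m x^2)*gfun ℓ x)
    (φ' := fun x => (1 - Real.tanh (β*lam * Gp c x + 0 + 1 * (x - (c-1)) + 1) ^ 2) *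
        (β*lam * (1 - |x - c|) + 1))
    (a := c - 1) (b := c + 1) (by linarith)
    (fun x hx => hm x (weld_subset hℓ hx))
    (fun x _ => hasDerivAt_barrier (β*lam) c 0 1 1 x)
    ?_ ?_
  · intro x hx
    refine lt_of_lt_of_le (hcomp x hx) ?_
    apply tanh_strictMono.monotone
    have h1 := Gp_bounds (c := c) (x := x) (by rw [abs_le]; constructor <;> linarith [hx.1, hx.2])
    have h2 : x - (c - 1) ≤ 2 := by linarith [hx.2]
    nlinarith [mul_pos hβ hlam, h1.2]
  · rw [Gp_left c]
    have : (0:ℝ) = Real.tanh 0 := by rw [Real.tanh_zero]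
    calc m (c - 1) ≤ 0 := hma
      _ = Real.tanh 0 := by rw [Real.tanh_zero]
      _ < _ := by apply tanh_strictMono; norm_num
  · intro x hx hxe
    have hg : gfun ℓ x = 1 - |x - c| := by
      apply gfun_eq_weld
      rw [abs_le]; constructor <;> linarith [hx.1, hx.2]
    rw [hg, hxe]
    have ht1 := tanh_lt_one' (β*lam * Gp c x + 0 + 1 * (x - (c-1)) + 1)
    have ht2 := neg_one_lt_tanh' (β*lam * Gp c x + 0 + 1 * (x - (c-1)) + 1)
    nlinarith

lemma reflect_sol {β lam ℓ j : ℝ} {m : ℝ → ℝ}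
    (hsol : IsStationarySolution β lam ℓ j m) :
    IsStationarySolution β lam ℓ j (fun x => -m (ℓ - x)) := by
  obtain ⟨⟨hm0, hm⟩, hmℓ⟩ := hsol
  refine ⟨⟨by simp [hmℓ], ?_⟩, by simp [hm0]⟩
  intro x hx
  have hx' : ℓ - x ∈ Icc (0:ℝ) ℓ := ⟨by linarith [hx.2], by linarith [hx.1]⟩
  have hD := hm (ℓ - x) hx'
  have hinner : HasDerivAt (fun y : ℝ => ℓ - y) (-1) x := (hasDerivAt_id x).const_sub ℓ
  have hcomp := (hD.comp x hinner).neg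
  refine hcomp.congr_deriv ?_
  rw [← gfun_symm ℓ x]
  ring


lemma barrier_up {β lam ℓ j α K e : ℝ} {m : ℝ → ℝ} (hβ : 0 < β) (hlam : 0 < lam)
    (hℓ : 4 < ℓ) (hj : 0 ≤ j) (hK : 0 < K)
    (hm : ∀ x ∈ Icc (0:ℝ) ℓ, HasDerivAt m (-2*j + β*lam*(1 - m x ^ 2) * gfun ℓ x) x)
    (h0 : m (ℓ/2 - 1) < Real.tanh (α + e)) :
    ∀ x ∈ Icc (ℓ/2 - 1) (ℓ/2 + 1),
      m x < Real.tanh (β*lam * Gp (ℓ/2) x + α + K * (x - (ℓ/2 - 1)) + e) := by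
  refine comparison (f := m)
    (φ := fun y => Real.tanh (β*lam * Gp (ℓ/2) y + α + K * (y - (ℓ/2 - 1)) + e))
    (f' := fun x => -2*j + β*lam*(1 - m x ^ 2) * gfun ℓ x)
    (φ' := fun x => (1 - Real.tanh (β*lam * Gp (ℓ/2) x + α + K*(x - (ℓ/2 - 1)) + e)^2) *
        (β*lam*(1 - |x - ℓ/2|) + K))
    (by linarith)
    (fun x hx => hm x (weld_subset hℓ hx))
    (fun x _ => hasDerivAt_barrier (β*lam) (ℓ/2) α K e x)
    ?_ ?_
  · rw [Gp_left, show (ℓ/2 - 1) - (ℓ/2 - 1) = (0:ℝ) by ring,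
      show β*lam*0 + α + K*0 + e = α + e by ring]
    exact h0
  · intro x hx hxe
    have hg : gfun ℓ x = 1 - |x - ℓ/2| :=
      gfun_eq_weld (by rw [abs_le]; constructor <;> linarith [hx.1, hx.2])
    rw [hg, hxe]
    set T := Real.tanh (β*lam * Gp (ℓ/2) x + α + K*(x - (ℓ/2 - 1)) + e) with hT
    have ht1 : T < 1 := tanh_lt_one' _
    have ht2 : -1 < T := neg_one_lt_tanh' _
    have h0' : (0:ℝ) < 1 - T^2 := by nlinarith
    nlinarith [mul_pos h0' hK]

lemma barrier_low {β lam ℓ j α K e : ℝ} {m : ℝ → ℝ} (hβ : 0 < β) (hlam : 0 < lam)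
    (hℓ : 4 < ℓ) (hK : 0 < K)
    (hm : ∀ x ∈ Icc (0:ℝ) ℓ, HasDerivAt m (-2*j + β*lam*(1 - m x ^ 2) * gfun ℓ x) x)
    (hKs : ∀ x ∈ Icc (ℓ/2 - 1) (ℓ/2 + 1), 2*j < (1 - m x ^ 2) * K)
    (h0 : Real.tanh (α + (-e)) < m (ℓ/2 - 1)) :
    ∀ x ∈ Icc (ℓ/2 - 1) (ℓ/2 + 1),
      Real.tanh (β*lam * Gp (ℓ/2) x + α + (-K) * (x - (ℓ/2 - 1)) + (-e)) < m x := by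
  refine comparison (φ := m)
    (f := fun y => Real.tanh (β*lam * Gp (ℓ/2) y + α + (-K) * (y - (ℓ/2 - 1)) + (-e)))
    (φ' := fun x => -2*j + β*lam*(1 - m x ^ 2) * gfun ℓ x)
    (f' := fun x => (1 - Real.tanh (β*lam * Gp (ℓ/2) x + α + (-K)*(x - (ℓ/2 - 1)) + (-e))^2) *
        (β*lam*(1 - |x - ℓ/2|) + (-K)))
    (by linarith)
    (fun x _ => hasDerivAt_barrier (β*lam) (ℓ/2) α (-K) (-e) x)
    (fun x hx => hm x (weld_subset hℓ hx))
    ?_ ?_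
  · rw [Gp_left, show (ℓ/2 - 1) - (ℓ/2 - 1) = (0:ℝ) by ring,
      show β*lam*0 + α + (-K)*0 + (-e) = α + (-e) by ring]
    exact h0
  · intro x hx hxe
    have hg : gfun ℓ x = 1 - |x - ℓ/2| :=
      gfun_eq_weld (by rw [abs_le]; constructor <;> linarith [hx.1, hx.2])
    rw [hg, hxe]
    nlinarith [hKs x hx]

set_option maxHeartbeats 1000000 in
/-- Theorem 3.1, (3.8): as `l → ∞` the stationary profile near the weld converges to `A`. -/
theorem stationary_blayer_limit (β lam : ℝ) (hβ : 0 < β) (hlam : 0 < lam) :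
    ∀ r ∈ Icc (-1 : ℝ) 1, ∀ ε > (0 : ℝ), ∃ L > (4 : ℝ), ∀ ℓ > L,
      ∀ j : ℝ, ∀ m : ℝ → ℝ, IsStationarySolution β lam ℓ j m →
        |m (ℓ / 2 + r) - Aprof β lam r| < ε := by
  intro r hr ε hε
  obtain ⟨M, hMdef⟩ : ∃ M', M' = Real.tanh (β*lam + 3) := ⟨_, rfl⟩
  have hM1 : M < 1 := by rw [hMdef]; exact tanh_lt_one' _
  have hMm1 : -1 < M := by rw [hMdef]; exact neg_one_lt_tanh' _
  obtain ⟨δ, hδdef⟩ : ∃ d, d = 1 - M^2 := ⟨_, rfl⟩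
  have hδ : 0 < δ := by rw [hδdef]; nlinarith
  have hP : 0 < 12/(δ*ε) := by positivity
  refine ⟨4 + 12/(δ*ε), by linarith, ?_⟩
  intro ℓ hℓ j m hsol
  have hℓ4 : 4 < ℓ := by linarith
  obtain ⟨⟨hm0, hm⟩, hmℓ⟩ := hsol
  have hsol' : IsStationarySolution β lam ℓ j m := ⟨⟨hm0, hm⟩, hmℓ⟩
  obtain ⟨ha, hb⟩ := endpoints hℓ4 hsol'
  have hj : 0 ≤ j := j_nonneg hβ hlam hℓ4 hsol'
  have hma : m (ℓ/2 - 1) ≤ 0 := by rw [ha]; nlinarith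
  have hup' := upper_bd hβ hlam hℓ4 hj hm hma
  have hup : ∀ x ∈ Icc (ℓ/2 - 1) (ℓ/2 + 1), m x < M := by
    intro x hx; rw [hMdef]; exact hup' x hx
  -- reflection gives the lower bound
  have hrefl := reflect_sol hsol'
  have hma2 : (fun x => -m (ℓ - x)) (ℓ/2 - 1) ≤ 0 := by
    dsimp only
    rw [show ℓ - (ℓ/2 - 1) = ℓ/2 + 1 by ring, hb]
    nlinarith
  have hup2 := upper_bd hβ hlam hℓ4 hj hrefl.1.2 hma2
  have hlow : ∀ x ∈ Icc (ℓ/2 - 1) (ℓ/2 + 1), -M < m x := by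
    intro x hx
    have hx' : ℓ - x ∈ Icc (ℓ/2 - 1) (ℓ/2 + 1) := ⟨by linarith [hx.2], by linarith [hx.1]⟩
    have h7 := hup2 (ℓ - x) hx'
    rw [show ℓ - (ℓ - x) = x by ring] at h7
    rw [hMdef]
    linarith
  have hsq : ∀ x ∈ Icc (ℓ/2 - 1) (ℓ/2 + 1), δ < 1 - m x ^ 2 := by
    intro x hx
    have h1 := hup x hx
    have h2 := hlow x hx
    rw [hδdef]; nlinarith
  -- the value at the left edge of the weld
  have haM : -M < m (ℓ/2 - 1) := hlow _ ⟨le_refl _, by linarith⟩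
  obtain ⟨α, hαdef⟩ : ∃ a, a = myatanh (m (ℓ/2 - 1)) := ⟨_, rfl⟩
  have htα : Real.tanh α = m (ℓ/2 - 1) := by
    rw [hαdef]; exact tanh_myatanh (by linarith) (by linarith)
  obtain ⟨ε', hε'def⟩ : ∃ e, e = ε/9 := ⟨_, rfl⟩
  have hε'0 : 0 < ε' := by rw [hε'def]; positivity
  obtain ⟨K, hKdef⟩ : ∃ k, k = 2*j/δ + ε' := ⟨_, rfl⟩
  have hK0 : 0 < K := by rw [hKdef]; positivity
  have hKδ : δ * K = 2*j + δ*ε' := by rw [hKdef]; field_simp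
  have hKs : ∀ x ∈ Icc (ℓ/2 - 1) (ℓ/2 + 1), 2*j < (1 - m x ^ 2) * K := by
    intro x hx
    have hs := hsq x hx
    nlinarith [mul_pos (show (0:ℝ) < 1 - m x^2 - δ by linarith) hK0]
  have hBup := barrier_up (α := α) (e := ε') hβ hlam hℓ4 hj hK0 hm
    (by rw [← htα]; exact tanh_strictMono (by linarith))
  have hBlow := barrier_low (α := α) (e := ε') hβ hlam hℓ4 hK0 hm hKs
    (by rw [← htα]; exact tanh_strictMono (by linarith))
  -- endpoint relation
  have hx2m : m (ℓ/2 + 1) = Real.tanh (-α) := by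
    rw [Real.tanh_neg, htα, ha, hb]; ring
  have hE1 : -α < β*lam + α + 2*K + ε' := by
    have h8 := hBup (ℓ/2 + 1) ⟨by linarith, le_refl _⟩
    rw [Gp_right, show (ℓ/2 + 1) - (ℓ/2 - 1) = (2:ℝ) by ring, hx2m] at h8
    have h9 := tanh_strictMono.lt_iff_lt.mp h8
    linarith
  have hE2 : β*lam + α - 2*K - ε' < -α := by
    have h8 := hBlow (ℓ/2 + 1) ⟨by linarith, le_refl _⟩
    rw [Gp_right, show (ℓ/2 + 1) - (ℓ/2 - 1) = (2:ℝ) by ring, hx2m] at h8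
    have h9 := tanh_strictMono.lt_iff_lt.mp h8
    linarith
  -- the point of interest
  have hxw : ℓ/2 + r ∈ Icc (ℓ/2 - 1) (ℓ/2 + 1) := ⟨by linarith [hr.1], by linarith [hr.2]⟩
  have hA : Aprof β lam r = Real.tanh (β*lam*(Gp (ℓ/2) (ℓ/2 + r) - 1/2)) := by
    unfold Aprof
    split_ifs with h
    · congr 1
      rw [Gp, show ℓ/2 + r - ℓ/2 = r by ring, abs_of_nonpos h]
      ring
    · congr 1
      rw [Gp, show ℓ/2 + r - ℓ/2 = r by ring, abs_of_pos (not_le.mp h)]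
      ring
  have hKx0 : 0 ≤ K * ((ℓ/2 + r) - (ℓ/2 - 1)) := mul_nonneg hK0.le (by linarith [hr.1])
  have hKx2 : K * ((ℓ/2 + r) - (ℓ/2 - 1)) ≤ K * 2 :=
    mul_le_mul_of_nonneg_left (by linarith [hr.2]) hK0.le
  -- upper estimate
  have hUp : m (ℓ/2 + r) - Real.tanh (β*lam*(Gp (ℓ/2) (ℓ/2 + r) - 1/2)) < 3*K + 1.5*ε' := by
    have h8 := hBup (ℓ/2 + r) hxw
    have h9 := le_trans (le_abs_self _)
      (tanh_lipschitz (β*lam * Gp (ℓ/2) (ℓ/2 + r) + α + K*((ℓ/2 + r) - (ℓ/2 - 1)) + ε')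
        (β*lam*(Gp (ℓ/2) (ℓ/2 + r) - 1/2)))
    have h10 : |β*lam * Gp (ℓ/2) (ℓ/2 + r) + α + K*((ℓ/2 + r) - (ℓ/2 - 1)) + ε' -
        (β*lam*(Gp (ℓ/2) (ℓ/2 + r) - 1/2))| < 3*K + 1.5*ε' := by
      rw [abs_lt]
      constructor <;> linarith
    linarith
  -- lower estimate
  have hLow : Real.tanh (β*lam*(Gp (ℓ/2) (ℓ/2 + r) - 1/2)) - m (ℓ/2 + r) < 3*K + 1.5*ε' := by
    have h8 := hBlow (ℓ/2 + r) hxw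
    have h9 := le_trans (le_abs_self _)
      (tanh_lipschitz (β*lam*(Gp (ℓ/2) (ℓ/2 + r) - 1/2))
        (β*lam * Gp (ℓ/2) (ℓ/2 + r) + α + (-K)*((ℓ/2 + r) - (ℓ/2 - 1)) + (-ε')))
    have h10 : |β*lam*(Gp (ℓ/2) (ℓ/2 + r) - 1/2) -
        (β*lam * Gp (ℓ/2) (ℓ/2 + r) + α + (-K)*((ℓ/2 + r) - (ℓ/2 - 1)) + (-ε'))| <
        3*K + 1.5*ε' := by
      rw [abs_lt]
      constructor <;> linarith
    linarith
  -- final numeric bound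
  have hjb : j * (ℓ - 2) < M := by
    have h8 := hup (ℓ/2 + 1) ⟨by linarith, le_refl _⟩
    rw [hb] at h8
    exact h8
  have hPj : j * (12/(δ*ε)) < 1 := by
    nlinarith [mul_nonneg hj (show (0:ℝ) ≤ ℓ - 2 - 12/(δ*ε) by linarith)]
  have h12 : 12 * j < δ * ε := by
    have hQ : δ * ε * (12/(δ*ε)) = 12 := by field_simp
    have h14 : δ * ε * (12/(δ*ε)) * j = 12 * j := by rw [hQ]
    have h15 := mul_lt_mul_of_pos_left hPj (mul_pos hδ hε)
    nlinarith [h14, h15]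
  have hfin : 3*K + 1.5*ε' < ε := by
    have hδε' : δ * ε' = δ * ε / 9 := by rw [hε'def]; ring
    have h13 : δ*(3*K + 1.5*ε') < δ*ε := by nlinarith [hKδ, h12, hδε']
    exact lt_of_mul_lt_mul_left h13 hδ.le
  rw [hA, abs_lt]
  constructor <;> linarith
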